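/- Let (f₀,φ₀) be a minimizer of the energy functional, i.e. an admissible pair with 𝓔(f₀,φ₀) = I^k_{M,J}. Then the L^{1+1/k} constraint is saturated, ‖f₀‖_{L^{1+1/k}} = J, and the potential is nonpositive, φ₀(x) ≤ 0 for almost every x ∈ ℝ³. -/

import Mathlib

open MeasureTheory Real Filter Topology
open scoped ENNReal

noncomputable section

/-- Euclidean 3-space. -/
abbrev E3 := EuclideanSpace ℝ (Fin 3)

/-- `φ` belongs to (a C¹ surrogate of) the space `D¹(ℝ³)`: it is continuously
differentiable, its gradient is square integrable and it vanishes at infinity in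
the sense that `{|φ| > a}` has finite measure for every `a > 0`. -/
def IsPotential (φ : E3 → ℝ) : Prop :=
  ContDiff ℝ 1 φ ∧ (∫⁻ x : E3, ENNReal.ofReal (‖gradient φ x‖ ^ 2)) < ⊤ ∧
    ∀ a : ℝ, 0 < a → volume {x : E3 | a < |φ x|} < ⊤

/-- `f ∈ Γ^k_{M,J}`: `f` is measurable, a.e. nonnegative, with `‖f‖_{L¹} = M` and
`‖f‖_{L^{1+1/k}} ≤ J` (in particular `f ∈ L¹ ∩ L^{1+1/k}`). -/
def InGamma (k M J : ℝ) (f : E3 → E3 → ℝ) : Prop :=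
  Measurable (Function.uncurry f) ∧
  (∀ᵐ z : E3 × E3, 0 ≤ f z.1 z.2) ∧
  (∫⁻ z : E3 × E3, ENNReal.ofReal (f z.1 z.2)) = ENNReal.ofReal M ∧
  eLpNorm (Function.uncurry f) (ENNReal.ofReal (1 + 1/k)) volume ≤ ENNReal.ofReal J

/-- Kinetic energy `E_kin(f,φ) = ∫∫ √(e^{2φ(x)}+|p|²) f(x,p) dp dx` (value in `[0,∞]`). -/
def kinE (f : E3 → E3 → ℝ) (φ : E3 → ℝ) : ℝ≥0∞ :=
  ∫⁻ z : E3 × E3, ENNReal.ofReal (Real.sqrt (Real.exp (2 * φ z.1) + ‖z.2‖ ^ 2) * f z.1 z.2)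

/-- Energy functional `𝓔(f,φ) = E_kin(f,φ) + (1/2)∫ |∇φ|²` (value in `[0,∞]`). -/
def energy (f : E3 → E3 → ℝ) (φ : E3 → ℝ) : ℝ≥0∞ :=
  kinE f φ + (∫⁻ x : E3, ENNReal.ofReal (‖gradient φ x‖ ^ 2)) / 2

/-- `(f,φ)` is admissible: `f ∈ Γ^k_{M,J}`, `φ` is a potential and
`∫∫ √(1+|p|²) f dp dx < ∞`. -/
def Admissible (k M J : ℝ) (f : E3 → E3 → ℝ) (φ : E3 → ℝ) : Prop :=
  InGamma k M J f ∧ IsPotential φ ∧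
  (∫⁻ z : E3 × E3, ENNReal.ofReal (Real.sqrt (1 + ‖z.2‖ ^ 2) * f z.1 z.2)) < ⊤

/-- The energy infimum `I^k_{M,J} = inf {𝓔(f,φ) : (f,φ) admissible}`. -/
def energyInf (k M J : ℝ) : ℝ≥0∞ :=
  sInf { e : ℝ≥0∞ | ∃ f φ, Admissible k M J f φ ∧ e = energy f φ }

/-- smooth truncation -/
def th (s : ℝ) : ℝ := min s 0 + Real.log (1 + max s 0)
def th' (s : ℝ) : ℝ := (1 + max s 0)⁻¹

lemma th'_pos (s : ℝ) : 0 < th' s := by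
  have : (0:ℝ) < 1 + max s 0 := by positivity
  exact inv_pos.2 this

lemma th'_le_one (s : ℝ) : th' s ≤ 1 := by
  rw [th']
  rw [inv_le_one_iff₀]
  right
  have : (0:ℝ) ≤ max s 0 := le_max_right s 0
  linarith

lemma th'_lt_one {s : ℝ} (hs : 0 < s) : th' s < 1 := by
  rw [th']
  have h1 : (1:ℝ) < 1 + max s 0 := by simp [lt_max_iff]; linarith
  exact inv_lt_one_of_one_lt₀ h1

lemma th_le (s : ℝ) : th s ≤ s := by
  rcases le_or_gt s 0 with h | h
  · simp [th, min_eq_left h, max_eq_right h]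
  · have := Real.log_le_sub_one_of_pos (x := 1 + max s 0) (by positivity)
    simp [th, min_eq_right h.le, max_eq_left h.le] at *
    linarith

lemma th_lt {s : ℝ} (hs : 0 < s) : th s < s := by
  have := Real.log_lt_sub_one_of_pos (x := 1 + max s 0) (by positivity)
    (by simp [max_eq_left hs.le]; linarith)
  simp [th, min_eq_right hs.le, max_eq_left hs.le] at *
  linarith

lemma th_abs (s : ℝ) : |th s| ≤ |s| := by
  rcases le_or_gt s 0 with h | h
  · simp [th, min_eq_left h, max_eq_right h]
  · have h1 : 0 ≤ Real.log (1 + max s 0) := Real.log_nonneg (by have : (0:ℝ) ≤ max s 0 := le_max_right s 0; linarith)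
    have h2 := th_lt h
    simp only [th, min_eq_right h.le, zero_add] at *
    rw [abs_of_nonneg h1, abs_of_pos h]
    linarith

lemma th_hasDerivAt (s : ℝ) : HasDerivAt th (th' s) s := by
  rcases lt_trichotomy s 0 with h | h | h
  · have he : th' s = 1 := by simp [th', max_eq_right h.le]
    rw [he]
    have : th =ᶠ[nhds s] id := by
      filter_upwards [Iio_mem_nhds h] with t ht
      have ht' : t ≤ 0 := le_of_lt ht
      simp [th, min_eq_left ht', max_eq_right ht']
    exact (hasDerivAt_id s).congr_of_eventuallyEq this
  · subst h
    have hl : HasDerivWithinAt th 1 (Set.Iic 0) 0 := by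
      refine ((hasDerivAt_id (0:ℝ)).hasDerivWithinAt).congr ?_ ?_
      · intro t ht
        simp only [Set.mem_Iic] at ht
        simp [th, min_eq_left ht, max_eq_right ht]
      · simp [th]
    have hr : HasDerivWithinAt th 1 (Set.Ici 0) 0 := by
      have h1 : HasDerivAt (fun t : ℝ => Real.log (1 + t)) 1 0 := by
        have := ((hasDerivAt_id (0:ℝ)).const_add 1).log (by norm_num)
        simpa using this
      refine h1.hasDerivWithinAt.congr ?_ ?_
      · intro t ht
        simp only [Set.mem_Ici] at ht
        simp [th, min_eq_right ht, max_eq_left ht]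
      · simp [th]
    have := hl.union hr
    rw [Set.Iic_union_Ici, hasDerivWithinAt_univ] at this
    simpa [th'] using this
  · have he : th' s = (1 + s)⁻¹ := by simp [th', max_eq_left h.le]
    rw [he]
    have h1 : HasDerivAt (fun t : ℝ => Real.log (1 + t)) (1 + s)⁻¹ s := by
      have := ((hasDerivAt_id s).const_add 1).log (by positivity)
      simpa [one_div] using this
    have : th =ᶠ[nhds s] (fun t : ℝ => Real.log (1 + t)) := by
      filter_upwards [Ioi_mem_nhds h] with t ht
      have ht' : (0:ℝ) ≤ t := le_of_lt ht
      simp [th, min_eq_right ht', max_eq_left ht']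
    exact h1.congr_of_eventuallyEq this

lemma th'_continuous : Continuous th' :=
  Continuous.inv₀ (by continuity) (fun s => by positivity)

lemma th_contDiff : ContDiff ℝ 1 th := by
  rw [contDiff_one_iff_deriv]
  refine ⟨fun s => (th_hasDerivAt s).differentiableAt, ?_⟩
  have : deriv th = th' := funext fun s => (th_hasDerivAt s).deriv
  rw [this]; exact th'_continuous

/-- chain rule for gradient of `th ∘ φ` -/
lemma gradient_th_comp (φ : E3 → ℝ) (hφ : ContDiff ℝ 1 φ) (x : E3) :
    gradient (fun y => th (φ y)) x = th' (φ x) • gradient φ x := by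
  have hd : DifferentiableAt ℝ φ x := (hφ.differentiable one_ne_zero) x
  have hc : HasFDerivAt (th ∘ φ) (th' (φ x) • fderiv ℝ φ x) x :=
    (th_hasDerivAt (φ x)).comp_hasFDerivAt x hd.hasFDerivAt
  have hg : HasGradientAt (th ∘ φ) (th' (φ x) • gradient φ x) x := by
    rw [hasGradientAt_iff_hasFDerivAt]
    refine hc.congr_fderiv ?_
    simp only [gradient]
    simp [_root_.map_smul, (InnerProductSpace.toDual ℝ E3).apply_symm_apply]
  exact hg.gradient

/-- strict lintegral inequality -/
lemma lintegral_lt_of_pos {α : Type*} [MeasurableSpace α] {μ : Measure α}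
    {h₁ h₂ : α → ℝ≥0∞} (hm1 : Measurable h₁) (hm2 : Measurable h₂)
    (hle : ∀ z, h₁ z ≤ h₂ z) (hfin : ∫⁻ z, h₁ z ∂μ ≠ ⊤)
    (hpos : 0 < μ {z | h₁ z < h₂ z}) : ∫⁻ z, h₁ z ∂μ < ∫⁻ z, h₂ z ∂μ := by
  have key : ∫⁻ z, h₂ z ∂μ = ∫⁻ z, h₁ z ∂μ + ∫⁻ z, (h₂ z - h₁ z) ∂μ := by
    rw [← lintegral_add_left hm1]
    refine lintegral_congr fun z => ?_
    rw [add_tsub_cancel_of_le (hle z)]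
  have hsub : 0 < ∫⁻ z, (h₂ z - h₁ z) ∂μ := by
    change 0 < ∫⁻ z, (h₂ - h₁) z ∂μ
    rw [lintegral_pos_iff_support (hm2.sub hm1)]
    refine hpos.trans_le (measure_mono ?_)
    intro z hz
    simp only [Function.mem_support, ne_eq, Pi.sub_apply, tsub_eq_zero_iff_le]
    exact not_le.2 hz
  rw [key]
  exact ENNReal.lt_add_right hfin hsub.ne'

/-- scaling of lintegral on E3 -/
lemma lintegral_smul_E3 (g : E3 → ℝ≥0∞) (hg : Measurable g) {r : ℝ} (hr : r ≠ 0) :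
    ∫⁻ y, g (r • y) = ENNReal.ofReal |(r ^ 3)⁻¹| * ∫⁻ y, g y := by
  have hmap := MeasureTheory.Measure.map_addHaar_smul (volume : Measure E3) hr
  rw [← lintegral_map hg (measurable_const_smul r), hmap, lintegral_smul_measure]
  congr 2
  rw [finrank_euclideanSpace_fin]

/-- scaling in the momentum variable on the product -/
lemma lintegral_smul_prod (G : E3 × E3 → ℝ≥0∞) (hG : Measurable G) {r : ℝ} (hr : r ≠ 0) :
    ∫⁻ z : E3 × E3, G (z.1, r • z.2) = ENNReal.ofReal |(r ^ 3)⁻¹| * ∫⁻ z : E3 × E3, G z := by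
  have hG2 : Measurable fun z : E3 × E3 => G (z.1, r • z.2) :=
    hG.comp (measurable_fst.prodMk (measurable_snd.const_smul r))
  rw [MeasureTheory.Measure.volume_eq_prod, lintegral_prod _ hG2.aemeasurable,
    lintegral_prod _ hG.aemeasurable]
  calc ∫⁻ x, ∫⁻ y, G (x, r • y) = ∫⁻ x, ENNReal.ofReal |(r ^ 3)⁻¹| * ∫⁻ y, G (x, y) :=
        lintegral_congr fun x =>
          lintegral_smul_E3 (fun y => G (x, y)) (hG.comp measurable_prodMk_left) hr
    _ = ENNReal.ofReal |(r ^ 3)⁻¹| * ∫⁻ x, ∫⁻ y, G (x, y) :=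
        lintegral_const_mul _ hG.lintegral_prod_right'

set_option maxHeartbeats 1000000 in
/-- a minimizer `(f₀,φ₀)` of the energy functional saturates the
`L^{1+1/k}` constraint, `‖f₀‖_{L^{1+1/k}} = J`, and has a.e. nonpositive potential. -/
theorem minimizer_saturates_and_nonpositive (k M J : ℝ)
    (hk : 0 < k) (hk2 : k < 2) (hM : 0 < M) (hJ : 0 < J)
    (f₀ : E3 → E3 → ℝ) (φ₀ : E3 → ℝ)
    (hadm : Admissible k M J f₀ φ₀)
    (hmin : energy f₀ φ₀ = energyInf k M J) :
    eLpNorm (Function.uncurry f₀) (ENNReal.ofReal (1 + 1/k)) volume = ENNReal.ofReal J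
    ∧ ∀ᵐ x : E3, φ₀ x ≤ 0 := by
  obtain ⟨⟨hmeas, hpos, hmass, hlq⟩, hpot, hfin⟩ := hadm
  have hφc : Continuous φ₀ := hpot.1.continuous
  -- minimality against arbitrary admissible competitors
  have hmin' : ∀ g ψ, Admissible k M J g ψ → energy f₀ φ₀ ≤ energy g ψ := by
    intro g ψ h
    rw [hmin]
    exact sInf_le ⟨g, ψ, h, rfl⟩
  -- the zero potential is admissible, giving finiteness of the minimal energy
  have hpot0 : IsPotential (fun _ : E3 => (0:ℝ)) := by
    refine ⟨contDiff_const, ?_, ?_⟩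
    · simp [gradient_const]
    · intro a ha
      have h0 : {x : E3 | a < |(fun _ : E3 => (0:ℝ)) x|} = ∅ := by
        ext x; simp; linarith
      rw [h0]; simp
  have hE0 : energy f₀ (fun _ : E3 => (0:ℝ))
      = ∫⁻ z : E3 × E3, ENNReal.ofReal (Real.sqrt (1 + ‖z.2‖ ^ 2) * f₀ z.1 z.2) := by
    rw [energy, kinE]
    simp [gradient_const]
  have hEfin : energy f₀ φ₀ < ⊤ := by
    refine lt_of_le_of_lt (hmin' f₀ _ ⟨⟨hmeas, hpos, hmass, hlq⟩, hpot0, hfin⟩) ?_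
    rw [hE0]; exact hfin
  have hkinfin : kinE f₀ φ₀ ≠ ⊤ := by
    intro h
    rw [energy, h, top_add] at hEfin
    exact absurd hEfin (lt_irrefl ⊤)
  have hDfin : (∫⁻ x : E3, ENNReal.ofReal (‖gradient φ₀ x‖ ^ 2)) ≠ ⊤ := hpot.2.1.ne
  have hD2fin : (∫⁻ x : E3, ENNReal.ofReal (‖gradient φ₀ x‖ ^ 2)) / 2 ≠ ⊤ :=
    (ENNReal.div_lt_top hDfin (by norm_num)).ne
  -- the nonnegative version of f₀
  set F : E3 × E3 → ℝ := fun z => max (f₀ z.1 z.2) 0 with hFdef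
  have hF : Measurable F := hmeas.max measurable_const
  have hFnn : ∀ z, 0 ≤ F z := fun z => le_max_right _ _
  have hFae : ∀ᵐ z : E3 × E3, F z = f₀ z.1 z.2 := by
    filter_upwards [hpos] with z hz
    exact max_eq_left hz
  have hmassF : (∫⁻ z : E3 × E3, ENNReal.ofReal (F z)) = ENNReal.ofReal M := by
    rw [← hmass]
    apply lintegral_congr_ae
    filter_upwards [hFae] with z hz
    rw [hz]
  constructor
  · -- PART 1 : saturation of the L^{1+1/k} constraint
    by_contra hne
    set q : ℝ := 1 + 1/k with hqdef
    have hq1 : 1 < q := by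
      have : 0 < 1/k := by positivity
      rw [hqdef]; linarith
    have hq0 : (0:ℝ) < q := by linarith
    have hqne : q ≠ 0 := hq0.ne'
    have hp0 : (ENNReal.ofReal q) ≠ 0 := (ENNReal.ofReal_pos.2 hq0).ne'
    have hptop : (ENNReal.ofReal q) ≠ ⊤ := ENNReal.ofReal_ne_top
    have htq : (ENNReal.ofReal q).toReal = q := ENNReal.toReal_ofReal hq0.le
    have hlt : eLpNorm (Function.uncurry f₀) (ENNReal.ofReal q) volume < ENNReal.ofReal J :=
      lt_of_le_of_ne hlq hne
    set B := eLpNorm (Function.uncurry f₀) (ENNReal.ofReal q) volume with hBdef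
    have hB0 : B ≠ 0 := by
      intro h0
      have hzero := (eLpNorm_eq_zero_iff hmeas.aestronglyMeasurable hp0).1 h0
      have hmz : (∫⁻ z : E3 × E3, ENNReal.ofReal (f₀ z.1 z.2)) = 0 := by
        have : (∫⁻ z : E3 × E3, ENNReal.ofReal (f₀ z.1 z.2)) = ∫⁻ _z : E3 × E3, 0 := by
          apply lintegral_congr_ae
          filter_upwards [hzero] with z hz
          rw [show f₀ z.1 z.2 = Function.uncurry f₀ z from rfl, hz]
          simp
        rw [this, lintegral_zero]
      rw [hmz] at hmass
      exact absurd hmass.symm (ENNReal.ofReal_pos.2 hM).ne'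
    have hBtop : B ≠ ⊤ := (hlt.trans_le le_top).ne
    set b := B.toReal with hbdef
    have hb0 : 0 < b := ENNReal.toReal_pos hB0 hBtop
    have hbJ : b < J := by
      have h := (ENNReal.toReal_lt_toReal hBtop ENNReal.ofReal_ne_top).2 hlt
      rwa [ENNReal.toReal_ofReal hJ.le] at h
    -- choose the scaling parameter lam > 1
    set C : ℝ → ℝ := fun l => l ^ 3 * ((l ^ 3)⁻¹) ^ (1/q) with hCdef
    have hC1 : C 1 = 1 := by simp [hCdef]
    have hCcont : ContinuousAt C 1 := by
      have h1 : ContinuousAt (fun l : ℝ => l ^ 3) 1 := (continuous_pow 3).continuousAt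
      have h2 : ContinuousAt (fun l : ℝ => (l ^ 3)⁻¹) 1 := h1.inv₀ (by norm_num)
      exact h1.mul (h2.rpow_const (Or.inl (by norm_num)))
    have htend : Filter.Tendsto (fun l => C l * b) (nhdsWithin 1 (Set.Ioi (1:ℝ))) (nhds b) := by
      have h : Filter.Tendsto C (nhdsWithin 1 (Set.Ioi (1:ℝ))) (nhds (C 1)) :=
        hCcont.tendsto.mono_left nhdsWithin_le_nhds
      have h2 := h.mul_const b
      rwa [hC1, one_mul] at h2
    obtain ⟨lam, hlamCb, hlam1⟩ :=
      ((htend.eventually_lt_const hbJ).and eventually_mem_nhdsWithin).exists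
    rw [Set.mem_Ioi] at hlam1
    have hlam0 : (0:ℝ) < lam := lt_trans one_pos hlam1
    have hl3 : (0:ℝ) < lam ^ 3 := by positivity
    have hClam0 : 0 ≤ C lam := by
      rw [hCdef]
      exact mul_nonneg hl3.le (Real.rpow_nonneg (by positivity) _)
    -- the rescaled competitor
    set g : E3 → E3 → ℝ := fun x v => lam ^ 3 * F (x, lam • v) with hgdef
    have hgmeas : Measurable (Function.uncurry g) :=
      measurable_const.mul (hF.comp (measurable_fst.prodMk (measurable_snd.const_smul lam)))
    -- the substitution identity
    have ksub : ∀ w : E3 × E3 → ℝ, Measurable w →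
        (∫⁻ z : E3 × E3, ENNReal.ofReal (w z * (lam ^ 3 * F (z.1, lam • z.2))))
          = ∫⁻ z : E3 × E3, ENNReal.ofReal (w (z.1, lam⁻¹ • z.2) * F z) := by
      intro w hw
      have hwm : Measurable fun z : E3 × E3 => w (z.1, lam⁻¹ • z.2) * F z :=
        (hw.comp (measurable_fst.prodMk (measurable_snd.const_smul lam⁻¹))).mul hF
      have hHm : Measurable fun z : E3 × E3 =>
          ENNReal.ofReal (lam ^ 3 * (w (z.1, lam⁻¹ • z.2) * F z)) :=
        (measurable_const.mul hwm).ennreal_ofReal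
      have h1 : ∀ z : E3 × E3, ENNReal.ofReal (w z * (lam ^ 3 * F (z.1, lam • z.2)))
          = (fun y : E3 × E3 => ENNReal.ofReal (lam ^ 3 * (w (y.1, lam⁻¹ • y.2) * F y)))
            (z.1, lam • z.2) := by
        intro z
        show ENNReal.ofReal (w z * (lam ^ 3 * F (z.1, lam • z.2)))
          = ENNReal.ofReal (lam ^ 3 * (w (z.1, lam⁻¹ • (lam • z.2)) * F (z.1, lam • z.2)))
        rw [smul_smul, inv_mul_cancel₀ hlam0.ne', one_smul, Prod.mk.eta]
        congr 1
        ring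
      calc (∫⁻ z : E3 × E3, ENNReal.ofReal (w z * (lam ^ 3 * F (z.1, lam • z.2))))
          = ∫⁻ z : E3 × E3, (fun y : E3 × E3 =>
              ENNReal.ofReal (lam ^ 3 * (w (y.1, lam⁻¹ • y.2) * F y))) (z.1, lam • z.2) :=
            lintegral_congr h1
        _ = ENNReal.ofReal |((lam ^ 3 : ℝ))⁻¹| * ∫⁻ y : E3 × E3,
              ENNReal.ofReal (lam ^ 3 * (w (y.1, lam⁻¹ • y.2) * F y)) :=
            lintegral_smul_prod _ hHm hlam0.ne'
        _ = ENNReal.ofReal |((lam ^ 3 : ℝ))⁻¹| * ∫⁻ y : E3 × E3,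
              ENNReal.ofReal (lam ^ 3) * ENNReal.ofReal (w (y.1, lam⁻¹ • y.2) * F y) :=
            by rw [lintegral_congr fun y : E3 × E3 =>
                (ENNReal.ofReal_mul hl3.le :
                  ENNReal.ofReal (lam ^ 3 * (w (y.1, lam⁻¹ • y.2) * F y)) = _)]
        _ = ∫⁻ z : E3 × E3, ENNReal.ofReal (w (z.1, lam⁻¹ • z.2) * F z) := by
            rw [lintegral_const_mul _ hwm.ennreal_ofReal, ← mul_assoc,
              ← ENNReal.ofReal_mul (abs_nonneg _), abs_of_pos (inv_pos.2 hl3),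
              inv_mul_cancel₀ hl3.ne', ENNReal.ofReal_one, one_mul]
    -- mass of the competitor
    have hgmass : (∫⁻ z : E3 × E3, ENNReal.ofReal (g z.1 z.2)) = ENNReal.ofReal M := by
      have h1 : (∫⁻ z : E3 × E3, ENNReal.ofReal (g z.1 z.2))
          = ∫⁻ z : E3 × E3,
              ENNReal.ofReal ((fun _ : E3 × E3 => (1:ℝ)) z * (lam ^ 3 * F (z.1, lam • z.2))) :=
        lintegral_congr fun z => by rw [one_mul]
      rw [h1, ksub _ measurable_const]
      rw [← hmassF]
      exact lintegral_congr fun z => by rw [one_mul]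
    -- L^q norm of the competitor
    have hIq : B = (∫⁻ z : E3 × E3, (ENNReal.ofReal (F z)) ^ q) ^ (1/q) := by
      rw [hBdef, eLpNorm_eq_lintegral_rpow_enorm_toReal hp0 hptop, htq]
      congr 1
      apply lintegral_congr_ae
      filter_upwards [hpos] with z hz
      rw [show Function.uncurry f₀ z = f₀ z.1 z.2 from rfl, Real.enorm_eq_ofReal hz]
      congr 2
      exact (max_eq_left hz).symm
    have hmeasFq : Measurable fun z : E3 × E3 => (ENNReal.ofReal (F z)) ^ q :=
      hF.ennreal_ofReal.pow_const q
    have hgIq : eLpNorm (Function.uncurry g) (ENNReal.ofReal q) volume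
        = ENNReal.ofReal (C lam) * B := by
      have h1 : ∀ z : E3 × E3, ((‖Function.uncurry g z‖₊ : ℝ≥0∞)) ^ q
          = ENNReal.ofReal (lam ^ 3) ^ q
              * (fun y : E3 × E3 => (ENNReal.ofReal (F y)) ^ q) (z.1, lam • z.2) := by
        intro z
        show ((‖g z.1 z.2‖₊ : ℝ≥0∞)) ^ q
          = ENNReal.ofReal (lam ^ 3) ^ q * (ENNReal.ofReal (F (z.1, lam • z.2))) ^ q
        rw [show g z.1 z.2 = lam ^ 3 * F (z.1, lam • z.2) from rfl,
          ← enorm_eq_nnnorm, Real.enorm_eq_ofReal (mul_nonneg hl3.le (hFnn _)),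
          ENNReal.ofReal_mul hl3.le, ENNReal.mul_rpow_of_nonneg _ _ hq0.le]
      calc eLpNorm (Function.uncurry g) (ENNReal.ofReal q) volume
          = (∫⁻ z : E3 × E3, ((‖Function.uncurry g z‖₊ : ℝ≥0∞)) ^ q) ^ (1/q) := by
            simp only [eLpNorm_eq_lintegral_rpow_enorm_toReal hp0 hptop, htq, enorm_eq_nnnorm]
        _ = (∫⁻ z : E3 × E3, ENNReal.ofReal (lam ^ 3) ^ q
              * (fun y : E3 × E3 => (ENNReal.ofReal (F y)) ^ q) (z.1, lam • z.2)) ^ (1/q) := by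
            rw [lintegral_congr h1]
        _ = (ENNReal.ofReal (lam ^ 3) ^ q * ∫⁻ z : E3 × E3,
              (fun y : E3 × E3 => (ENNReal.ofReal (F y)) ^ q) (z.1, lam • z.2)) ^ (1/q) := by
            exact congrArg (· ^ (1/q)) (lintegral_const_mul _
              ((hmeasFq.comp (measurable_fst.prodMk (measurable_snd.const_smul lam))) :
                Measurable fun z : E3 × E3 =>
                  (fun y : E3 × E3 => (ENNReal.ofReal (F y)) ^ q) (z.1, lam • z.2)))
        _ = (ENNReal.ofReal (lam ^ 3) ^ q * (ENNReal.ofReal |((lam ^ 3 : ℝ))⁻¹|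
              * ∫⁻ z : E3 × E3, (ENNReal.ofReal (F z)) ^ q)) ^ (1/q) := by
            rw [lintegral_smul_prod _ hmeasFq hlam0.ne']
        _ = ENNReal.ofReal (C lam) * B := by
            rw [hIq, ENNReal.mul_rpow_of_nonneg _ _ (by positivity : (0:ℝ) ≤ 1/q),
              ENNReal.mul_rpow_of_nonneg _ _ (by positivity : (0:ℝ) ≤ 1/q), ← mul_assoc]
            congr 1
            rw [← ENNReal.rpow_mul, mul_one_div, div_self hqne, ENNReal.rpow_one,
              abs_of_pos (inv_pos.2 hl3), ENNReal.ofReal_rpow_of_pos (inv_pos.2 hl3),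
              ← ENNReal.ofReal_mul hl3.le]
    have hglq : eLpNorm (Function.uncurry g) (ENNReal.ofReal q) volume ≤ ENNReal.ofReal J := by
      rw [hgIq]
      calc ENNReal.ofReal (C lam) * B = ENNReal.ofReal (C lam * b) := by
            rw [ENNReal.ofReal_mul hClam0, hbdef, ENNReal.ofReal_toReal hBtop]
        _ ≤ ENNReal.ofReal J := ENNReal.ofReal_le_ofReal hlamCb.le
    -- norm comparison facts
    have hlaminv1 : lam⁻¹ < 1 := inv_lt_one_of_one_lt₀ hlam1
    have hlaminv0 : (0:ℝ) < lam⁻¹ := inv_pos.2 hlam0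
    have hnorm_le : ∀ v : E3, ‖lam⁻¹ • v‖ ^ 2 ≤ ‖v‖ ^ 2 := by
      intro v
      rw [norm_smul, Real.norm_eq_abs, abs_of_pos hlaminv0, mul_pow]
      have h2 : lam⁻¹ ^ 2 ≤ 1 := by nlinarith
      nlinarith [mul_le_mul_of_nonneg_right h2 (sq_nonneg ‖v‖)]
    have hnorm_lt : ∀ v : E3, v ≠ 0 → ‖lam⁻¹ • v‖ ^ 2 < ‖v‖ ^ 2 := by
      intro v hv
      rw [norm_smul, Real.norm_eq_abs, abs_of_pos hlaminv0, mul_pow]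
      have hvp : 0 < ‖v‖ := norm_pos_iff.2 hv
      have h2 : lam⁻¹ ^ 2 < 1 := by nlinarith
      nlinarith [mul_lt_mul_of_pos_right h2 (pow_pos hvp 2)]
    -- kinetic energy of the competitor, and strict decrease
    have hkg : kinE g φ₀ = ∫⁻ z : E3 × E3,
        ENNReal.ofReal (Real.sqrt (Real.exp (2 * φ₀ z.1) + ‖lam⁻¹ • z.2‖ ^ 2) * F z) := by
      exact ksub (fun z : E3 × E3 => Real.sqrt (Real.exp (2 * φ₀ z.1) + ‖z.2‖ ^ 2))
        (((Real.continuous_exp.comp (continuous_const.mul (hφc.comp continuous_fst))).add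
          ((continuous_snd.norm).pow 2)).sqrt.measurable)
    have hKF : kinE f₀ φ₀ = ∫⁻ z : E3 × E3,
        ENNReal.ofReal (Real.sqrt (Real.exp (2 * φ₀ z.1) + ‖z.2‖ ^ 2) * F z) := by
      apply lintegral_congr_ae
      filter_upwards [hFae] with z hz
      rw [hz]
    have hm1 : Measurable fun z : E3 × E3 =>
        ENNReal.ofReal (Real.sqrt (Real.exp (2 * φ₀ z.1) + ‖lam⁻¹ • z.2‖ ^ 2) * F z) :=
      ((((Real.continuous_exp.comp (continuous_const.mul (hφc.comp continuous_fst))).add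
        (((continuous_snd.const_smul lam⁻¹).norm).pow 2)).sqrt.measurable).mul hF).ennreal_ofReal
    have hm2 : Measurable fun z : E3 × E3 =>
        ENNReal.ofReal (Real.sqrt (Real.exp (2 * φ₀ z.1) + ‖z.2‖ ^ 2) * F z) :=
      ((((Real.continuous_exp.comp (continuous_const.mul (hφc.comp continuous_fst))).add
        ((continuous_snd.norm).pow 2)).sqrt.measurable).mul hF).ennreal_ofReal
    have hle : ∀ z : E3 × E3,
        ENNReal.ofReal (Real.sqrt (Real.exp (2 * φ₀ z.1) + ‖lam⁻¹ • z.2‖ ^ 2) * F z)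
          ≤ ENNReal.ofReal (Real.sqrt (Real.exp (2 * φ₀ z.1) + ‖z.2‖ ^ 2) * F z) := by
      intro z
      apply ENNReal.ofReal_le_ofReal
      apply mul_le_mul_of_nonneg_right _ (hFnn z)
      exact Real.sqrt_le_sqrt (add_le_add_right (hnorm_le z.2) _)
    have hkin_lt : kinE g φ₀ < kinE f₀ φ₀ := by
      rw [hkg, hKF]
      apply lintegral_lt_of_pos hm1 hm2 hle
      · refine ne_top_of_le_ne_top ?_ (lintegral_mono hle)
        rw [← hKF]; exact hkinfin
      · -- positive measure of strict inequality
        have hnull : volume {z : E3 × E3 | z.2 = (0:E3)} = 0 := by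
          have hset : {z : E3 × E3 | z.2 = (0:E3)} = Set.univ ×ˢ ({0} : Set E3) := by
            ext ⟨x, p⟩
            simp only [Set.mem_setOf_eq, Set.mem_prod, Set.mem_univ, Set.mem_singleton_iff,
              true_and]
          rw [hset, MeasureTheory.Measure.volume_eq_prod, MeasureTheory.Measure.prod_prod,
            measure_singleton, mul_zero]
        have hsup : 0 < volume {z : E3 × E3 | 0 < F z} := by
          have hpos' : 0 < ∫⁻ z : E3 × E3, ENNReal.ofReal (F z) := by
            rw [hmassF]; exact ENNReal.ofReal_pos.2 hM
          rw [lintegral_pos_iff_support hF.ennreal_ofReal] at hpos'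
          refine hpos'.trans_le (measure_mono ?_)
          intro z hz
          simp only [Function.mem_support, ne_eq, ENNReal.ofReal_eq_zero, not_le] at hz
          exact hz
        have hSsub : {z : E3 × E3 | 0 < F z} \ {z : E3 × E3 | z.2 = (0:E3)}
            ⊆ {z : E3 × E3 |
              ENNReal.ofReal (Real.sqrt (Real.exp (2 * φ₀ z.1) + ‖lam⁻¹ • z.2‖ ^ 2) * F z)
              < ENNReal.ofReal (Real.sqrt (Real.exp (2 * φ₀ z.1) + ‖z.2‖ ^ 2) * F z)} := by
          rintro z ⟨hz1, hz2⟩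
          simp only [Set.mem_setOf_eq] at hz1 hz2 ⊢
          have hsq2 : 0 < Real.sqrt (Real.exp (2 * φ₀ z.1) + ‖z.2‖ ^ 2) :=
            Real.sqrt_pos.2 (by positivity)
          rw [ENNReal.ofReal_lt_ofReal_iff (mul_pos hsq2 hz1)]
          apply mul_lt_mul_of_pos_right _ hz1
          apply Real.sqrt_lt_sqrt (by positivity)
          exact add_lt_add_right (hnorm_lt z.2 hz2) _
        calc (0:ℝ≥0∞) < volume ({z : E3 × E3 | 0 < F z} \ {z : E3 × E3 | z.2 = (0:E3)}) := by
              rw [measure_diff_null hnull]; exact hsup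
          _ ≤ _ := measure_mono hSsub
    -- the competitor is admissible
    have hadm_g : Admissible k M J g φ₀ := by
      refine ⟨⟨hgmeas, Filter.Eventually.of_forall
        (fun z => mul_nonneg hl3.le (hFnn _)), hgmass, hglq⟩, hpot, ?_⟩
      have heq : (∫⁻ z : E3 × E3, ENNReal.ofReal (Real.sqrt (1 + ‖z.2‖ ^ 2) * g z.1 z.2))
          = ∫⁻ z : E3 × E3, ENNReal.ofReal (Real.sqrt (1 + ‖lam⁻¹ • z.2‖ ^ 2) * F z) :=
        ksub (fun z : E3 × E3 => Real.sqrt (1 + ‖z.2‖ ^ 2))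
          ((continuous_const.add ((continuous_snd.norm).pow 2)).sqrt.measurable)
      rw [heq]
      have hle2 : (∫⁻ z : E3 × E3, ENNReal.ofReal (Real.sqrt (1 + ‖lam⁻¹ • z.2‖ ^ 2) * F z))
          ≤ ∫⁻ z : E3 × E3, ENNReal.ofReal (Real.sqrt (1 + ‖z.2‖ ^ 2) * F z) := by
        apply lintegral_mono
        intro z
        apply ENNReal.ofReal_le_ofReal
        apply mul_le_mul_of_nonneg_right _ (hFnn z)
        exact Real.sqrt_le_sqrt (add_le_add_right (hnorm_le z.2) _)
      refine lt_of_le_of_lt hle2 ?_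
      have heq2 : (∫⁻ z : E3 × E3, ENNReal.ofReal (Real.sqrt (1 + ‖z.2‖ ^ 2) * F z))
          = ∫⁻ z : E3 × E3, ENNReal.ofReal (Real.sqrt (1 + ‖z.2‖ ^ 2) * f₀ z.1 z.2) := by
        apply lintegral_congr_ae
        filter_upwards [hFae] with z hz
        rw [hz]
      rw [heq2]; exact hfin
    -- contradiction
    have hEg : energy g φ₀ < energy f₀ φ₀ := by
      rw [energy, energy, add_comm (kinE g φ₀), add_comm (kinE f₀ φ₀)]
      exact ENNReal.add_lt_add_of_le_of_lt hD2fin le_rfl hkin_lt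
    exact absurd (hmin' g φ₀ hadm_g) (not_le.2 hEg)
  · -- PART 2 : the potential is a.e. nonpositive
    by_contra hcontra
    set ψ : E3 → ℝ := fun x => th (φ₀ x) with hψdef
    set U : Set E3 := {x : E3 | 0 < φ₀ x} with hUdef
    have hUopen : IsOpen U := isOpen_lt continuous_const hφc
    have hU : 0 < volume U := by
      rw [MeasureTheory.ae_iff] at hcontra
      have hset : {x : E3 | ¬ φ₀ x ≤ 0} = U := by
        ext x; simp [hUdef, not_le]
      rw [hset] at hcontra
      exact pos_iff_ne_zero.2 hcontra
    -- gradient facts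
    have hgradcont : Continuous fun x => gradient φ₀ x := by
      simp only [gradient]
      exact ((InnerProductSpace.toDual ℝ E3).symm.continuous).comp
        (hpot.1.continuous_fderiv one_ne_zero)
    have hgradψ : ∀ x, gradient ψ x = th' (φ₀ x) • gradient φ₀ x :=
      gradient_th_comp φ₀ hpot.1
    have hψgradcont : Continuous fun x => gradient ψ x := by
      rw [show (fun x => gradient ψ x) = fun x => th' (φ₀ x) • gradient φ₀ x
        from funext hgradψ]
      exact (th'_continuous.comp hφc).smul hgradcont
    have hDle : ∀ x : E3, ENNReal.ofReal (‖gradient ψ x‖ ^ 2)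
        ≤ ENNReal.ofReal (‖gradient φ₀ x‖ ^ 2) := by
      intro x
      apply ENNReal.ofReal_le_ofReal
      rw [hgradψ x, norm_smul, Real.norm_eq_abs, abs_of_pos (th'_pos _), mul_pow]
      have h2 : th' (φ₀ x) ^ 2 ≤ 1 := by nlinarith [th'_pos (φ₀ x), th'_le_one (φ₀ x)]
      nlinarith [mul_le_mul_of_nonneg_right h2 (sq_nonneg ‖gradient φ₀ x‖)]
    have hψpot : IsPotential ψ := by
      refine ⟨th_contDiff.comp hpot.1, lt_of_le_of_lt (lintegral_mono hDle) hpot.2.1, ?_⟩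
      intro a ha
      refine lt_of_le_of_lt (measure_mono ?_) (hpot.2.2 a ha)
      intro x hx
      simp only [Set.mem_setOf_eq] at hx ⊢
      exact lt_of_lt_of_le hx (th_abs _)
    -- the kinetic energy does not increase
    have hkinle : kinE f₀ ψ ≤ kinE f₀ φ₀ := by
      apply lintegral_mono
      intro z
      rcases le_or_gt 0 (f₀ z.1 z.2) with h | h
      · apply ENNReal.ofReal_le_ofReal
        apply mul_le_mul_of_nonneg_right _ h
        apply Real.sqrt_le_sqrt
        apply add_le_add_left
        apply Real.exp_le_exp.2
        have := th_le (φ₀ z.1)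
        linarith
      · have hz : ENNReal.ofReal (Real.sqrt (Real.exp (2 * ψ z.1) + ‖z.2‖ ^ 2) * f₀ z.1 z.2)
            = 0 := ENNReal.ofReal_eq_zero.2 (mul_nonpos_iff.2 (Or.inl ⟨Real.sqrt_nonneg _, h.le⟩))
        exact le_of_eq_of_le hz zero_le
    by_cases hcase : ∀ x ∈ U, gradient φ₀ x = 0
    · -- then φ₀ is a positive constant : contradiction with vanishing at infinity
      obtain ⟨x₀, hx₀⟩ := nonempty_of_measure_ne_zero hU.ne'
      have hx₀' : 0 < φ₀ x₀ := hx₀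
      have hTopen : IsOpen {x : E3 | φ₀ x = φ₀ x₀} := by
        rw [Metric.isOpen_iff]
        intro x hx
        have hxv : φ₀ x = φ₀ x₀ := hx
        have hxU : x ∈ U := by
          show 0 < φ₀ x
          rw [hxv]; exact hx₀'
        obtain ⟨ε, hε, hball⟩ := Metric.isOpen_iff.1 hUopen x hxU
        refine ⟨ε, hε, fun y hy => ?_⟩
        have hconst : φ₀ y = φ₀ x := by
          refine Convex.is_const_of_fderivWithin_eq_zero (convex_ball x ε)
            ((hpot.1.differentiable one_ne_zero).differentiableOn) (fun w hw => ?_) hy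
            (Metric.mem_ball_self hε)
          rw [fderivWithin_of_isOpen Metric.isOpen_ball hw]
          have hg0 : gradient φ₀ w = 0 := hcase w (hball hw)
          have h := congrArg (InnerProductSpace.toDual ℝ E3) hg0
          rw [gradient] at h
          simpa [(InnerProductSpace.toDual ℝ E3).apply_symm_apply] using h
        show φ₀ y = φ₀ x₀
        rw [hconst, hxv]
      have hTclosed : IsClosed {x : E3 | φ₀ x = φ₀ x₀} := isClosed_eq hφc continuous_const
      have hTuniv : {x : E3 | φ₀ x = φ₀ x₀} = Set.univ :=
        IsClopen.eq_univ ⟨hTclosed, hTopen⟩ ⟨x₀, rfl⟩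
      have hall : ∀ x, φ₀ x = φ₀ x₀ := fun x => by
        have hx : x ∈ {x : E3 | φ₀ x = φ₀ x₀} := hTuniv ▸ Set.mem_univ x
        exact hx
      have hbig : {x : E3 | φ₀ x₀ / 2 < |φ₀ x|} = Set.univ := by
        ext x
        simp only [Set.mem_setOf_eq, Set.mem_univ, iff_true, hall x, abs_of_pos hx₀']
        linarith
      have hfin2 := hpot.2.2 (φ₀ x₀ / 2) (by linarith)
      rw [hbig, MeasureTheory.measure_univ_of_isAddLeftInvariant] at hfin2
      exact absurd hfin2 (lt_irrefl ⊤)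
    · -- there is a point of U where the gradient does not vanish : strict decrease
      push_neg at hcase
      obtain ⟨x₀, hx₀U, hx₀g⟩ := hcase
      have hWopen : IsOpen (U ∩ {x : E3 | gradient φ₀ x ≠ 0}) :=
        hUopen.inter ((isClosed_singleton.preimage hgradcont).isOpen_compl)
      obtain ⟨ε, hε, hball⟩ := Metric.isOpen_iff.1 hWopen x₀ ⟨hx₀U, hx₀g⟩
      have hDlt : (∫⁻ x : E3, ENNReal.ofReal (‖gradient ψ x‖ ^ 2))
          < ∫⁻ x : E3, ENNReal.ofReal (‖gradient φ₀ x‖ ^ 2) := by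
        apply lintegral_lt_of_pos
          ((hψgradcont.norm.pow 2).measurable).ennreal_ofReal
          ((hgradcont.norm.pow 2).measurable).ennreal_ofReal hDle
          (ne_top_of_le_ne_top hDfin (lintegral_mono hDle))
        refine lt_of_lt_of_le (Metric.measure_ball_pos volume x₀ hε) (measure_mono ?_)
        intro y hy
        obtain ⟨hyU, hyg⟩ := hball hy
        have hyU' : 0 < φ₀ y := hyU
        have hgp : 0 < ‖gradient φ₀ y‖ ^ 2 := pow_pos (norm_pos_iff.2 hyg) 2
        show ENNReal.ofReal (‖gradient ψ y‖ ^ 2) < ENNReal.ofReal (‖gradient φ₀ y‖ ^ 2)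
        rw [ENNReal.ofReal_lt_ofReal_iff hgp, hgradψ y, norm_smul, Real.norm_eq_abs,
          abs_of_pos (th'_pos _), mul_pow]
        have h1 := th'_lt_one hyU'
        have h2 := th'_pos (φ₀ y)
        have h3 : th' (φ₀ y) ^ 2 < 1 := by nlinarith
        nlinarith [mul_lt_mul_of_pos_right h3 hgp]
      have hEψ : energy f₀ ψ < energy f₀ φ₀ := by
        rw [energy, energy]
        refine ENNReal.add_lt_add_of_le_of_lt (ne_top_of_le_ne_top hkinfin hkinle) hkinle ?_
        rw [div_eq_mul_inv, div_eq_mul_inv]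
        refine ENNReal.mul_lt_mul_left ?_ ?_ hDlt
        · simp
        · simp
      have hadmψ : Admissible k M J f₀ ψ := ⟨⟨hmeas, hpos, hmass, hlq⟩, hψpot, hfin⟩
      exact absurd (hmin' f₀ ψ hadmψ) (not_le.2 hEψ)
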